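/- Any test T̄ deciding between two hypotheses with risk at most ε̄ ∈ (0, 1/2) induces a detector φ̄(ω) = (1/2)·ln((1−ε̄)/ε̄)·T̄(ω) whose risk is at most 2√(ε̄(1−ε̄)): for every density p obeying the first hypothesis, ∫ e^{−φ̄} p dP ≤ 2√(ε̄(1−ε̄)), and for every density q obeying the second hypothesis, ∫ e^{φ̄} q dP ≤ 2√(ε̄(1−ε̄)). -/

import Mathlib

open MeasureTheory

lemma exp_half_log_sqrt {r : ℝ} (hr : 0 < r) :
    Real.exp ((1/2) * Real.log r) = Real.sqrt r := by
  rw [Real.sqrt_eq_rpow, Real.rpow_def_of_pos hr]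
  ring_nf

lemma sqrt_ratio_eq {ε : ℝ} (h0 : 0 < ε) (h1 : ε < 1) :
    Real.sqrt ((1 - ε)/ε) = (1 - ε) / Real.sqrt (ε * (1 - ε)) ∧
    Real.sqrt (ε/(1 - ε)) = ε / Real.sqrt (ε * (1 - ε)) := by
  have h1' : 0 < 1 - ε := by linarith
  have hs : Real.sqrt (ε * (1-ε)) = Real.sqrt ε * Real.sqrt (1-ε) := Real.sqrt_mul h0.le _
  have hε : Real.sqrt ε * Real.sqrt ε = ε := Real.mul_self_sqrt h0.le
  have h1ε : Real.sqrt (1-ε) * Real.sqrt (1-ε) = (1-ε) := Real.mul_self_sqrt h1'.le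
  have hεpos : 0 < Real.sqrt ε := Real.sqrt_pos.mpr h0
  have h1εpos : 0 < Real.sqrt (1-ε) := Real.sqrt_pos.mpr h1'
  constructor
  · rw [Real.sqrt_div h1'.le, hs]
    field_simp
    nlinarith [hε, h1ε]
  · rw [Real.sqrt_div h0.le, hs]
    field_simp
    nlinarith [hε, h1ε]

lemma detector_aux {Ω : Type*} [MeasurableSpace Ω] (P : Measure Ω)
    (S : Set Ω) (hS : MeasurableSet S)
    (f : Ω → ℝ) (hf0 : ∀ ω, 0 ≤ f ω) (hfi : Integrable f P)
    (hf1 : ∫ ω, f ω ∂P = 1)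
    (ε : ℝ) (h0 : 0 < ε) (h12 : ε < 1/2) (hbad : ∫ ω in S, f ω ∂P ≤ ε)
    (g : Ω → ℝ) (hgm : Measurable g)
    (hgS : ∀ ω ∈ S, g ω = Real.sqrt ((1-ε)/ε))
    (hgSc : ∀ ω ∉ S, g ω = Real.sqrt (ε/(1-ε))) :
    ∫ ω, g ω * f ω ∂P ≤ 2 * Real.sqrt (ε * (1-ε)) := by
  have h1' : 0 < 1 - ε := by linarith
  set A := Real.sqrt (ε/(1-ε)) with hA
  set B := Real.sqrt ((1-ε)/ε) with hB
  have hA0 : 0 ≤ A := Real.sqrt_nonneg _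
  have hB0 : 0 ≤ B := Real.sqrt_nonneg _
  have hAB : A ≤ B := by
    apply Real.sqrt_le_sqrt
    rw [div_le_div_iff₀ h1' h0]
    nlinarith
  -- integrability
  have hint : Integrable (fun ω => g ω * f ω) P := by
    apply (hfi.const_mul B).mono'
    · exact hgm.aestronglyMeasurable.mul hfi.aestronglyMeasurable
    · filter_upwards with ω
      rw [Real.norm_eq_abs, abs_mul, abs_of_nonneg (hf0 ω)]
      have : |g ω| ≤ B := by
        by_cases h : ω ∈ S
        · rw [hgS ω h, abs_of_nonneg hB0]
        · rw [hgSc ω h, abs_of_nonneg hA0]; exact hAB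
      exact mul_le_mul_of_nonneg_right this (hf0 ω)
  have hsplit : ∫ ω in S, g ω * f ω ∂P + ∫ ω in Sᶜ, g ω * f ω ∂P
      = ∫ ω, g ω * f ω ∂P := integral_add_compl hS hint
  have hIS : ∫ ω in S, g ω * f ω ∂P = B * ∫ ω in S, f ω ∂P := by
    rw [← integral_const_mul]
    exact setIntegral_congr_fun hS (fun ω hω => by rw [hgS ω hω])
  have hISc : ∫ ω in Sᶜ, g ω * f ω ∂P = A * ∫ ω in Sᶜ, f ω ∂P := by
    rw [← integral_const_mul]
    exact setIntegral_congr_fun hS.compl (fun ω hω => by rw [hgSc ω hω])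
  have hfsplit : ∫ ω in S, f ω ∂P + ∫ ω in Sᶜ, f ω ∂P = 1 := by
    rw [integral_add_compl hS hfi, hf1]
  set a := ∫ ω in S, f ω ∂P with ha
  have ha0 : 0 ≤ a := setIntegral_nonneg hS (fun ω _ => hf0 ω)
  have hSc : ∫ ω in Sᶜ, f ω ∂P = 1 - a := by linarith
  have htot : ∫ ω, g ω * f ω ∂P = B * a + A * (1 - a) := by
    rw [← hsplit, hIS, hISc, hSc]
  rw [htot]
  obtain ⟨hBeq, hAeq⟩ := sqrt_ratio_eq h0 (by linarith)
  have hspos : 0 < Real.sqrt (ε * (1-ε)) := Real.sqrt_pos.mpr (by nlinarith)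
  have hsq : Real.sqrt (ε * (1-ε)) * Real.sqrt (ε * (1-ε)) = ε * (1-ε) :=
    Real.mul_self_sqrt (by nlinarith)
  rw [hB, hA, hBeq, hAeq]
  rw [div_mul_eq_mul_div, div_mul_eq_mul_div, ← add_div, div_le_iff₀ hspos]
  nlinarith [hbad, ha0, hsq, hspos]

/-- Any test with risk ε̄ ∈ (0,1/2) induces the detector
φ̄ = (1/2) ln((1-ε̄)/ε̄) · T̄ whose risk is at most 2√(ε̄(1-ε̄)). -/
theorem test_induces_detector_with_risk
    {Ω : Type*} [MeasurableSpace Ω] (P : Measure Ω)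
    (X Y : Set (Ω → ℝ))
    (T : Ω → ℝ) (hTm : Measurable T) (hTval : ∀ ω, T ω = 1 ∨ T ω = -1)
    (εbar : ℝ) (h0 : 0 < εbar) (h12 : εbar < 1/2)
    (hXd : ∀ p ∈ X, (∀ ω, 0 ≤ p ω) ∧ Measurable p ∧ Integrable p P ∧ ∫ ω, p ω ∂P = 1)
    (hYd : ∀ q ∈ Y, (∀ ω, 0 ≤ q ω) ∧ Measurable q ∧ Integrable q P ∧ ∫ ω, q ω ∂P = 1)
    (hriskX : ∀ p ∈ X, ∫ ω in {ω | T ω = -1}, p ω ∂P ≤ εbar)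
    (hriskY : ∀ q ∈ Y, ∫ ω in {ω | T ω = 1}, q ω ∂P ≤ εbar) :
    (∀ p ∈ X, ∫ ω, Real.exp (-((1/2) * Real.log ((1 - εbar)/εbar) * T ω)) * p ω ∂P
        ≤ 2 * Real.sqrt (εbar * (1 - εbar))) ∧
    (∀ q ∈ Y, ∫ ω, Real.exp ((1/2) * Real.log ((1 - εbar)/εbar) * T ω) * q ω ∂P
        ≤ 2 * Real.sqrt (εbar * (1 - εbar))) := by
  have h1' : 0 < 1 - εbar := by linarith
  have hrpos : 0 < (1 - εbar)/εbar := div_pos h1' h0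
  have hrpos' : 0 < εbar/(1 - εbar) := div_pos h0 h1'
  set c := (1/2) * Real.log ((1 - εbar)/εbar) with hc
  have hexpB : Real.exp c = Real.sqrt ((1 - εbar)/εbar) := exp_half_log_sqrt hrpos
  have hexpA : Real.exp (-c) = Real.sqrt (εbar/(1 - εbar)) := by
    rw [Real.exp_neg, hexpB, ← Real.sqrt_inv, inv_div]
  constructor
  · intro p hp
    obtain ⟨hp0, hpm, hpi, hp1⟩ := hXd p hp
    have hSm : MeasurableSet {ω | T ω = -1} := hTm (measurableSet_singleton (-1))
    exact detector_aux P _ hSm p hp0 hpi hp1 εbar h0 h12 (hriskX p hp)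
      (fun ω => Real.exp (-(c * T ω)))
      ((hTm.const_mul c).neg.exp)
      (fun ω hω => by
        simp only [Set.mem_setOf_eq] at hω
        show Real.exp (-(c * T ω)) = _
        rw [hω, show -(c * (-1:ℝ)) = c by ring, hexpB])
      (fun ω hω => by
        simp only [Set.mem_setOf_eq] at hω
        have hT1 : T ω = 1 := (hTval ω).resolve_right hω
        show Real.exp (-(c * T ω)) = _
        rw [hT1, show -(c * (1:ℝ)) = -c by ring, hexpA])
  · intro q hq
    obtain ⟨hq0, hqm, hqi, hq1⟩ := hYd q hq
    have hSm : MeasurableSet {ω | T ω = 1} := hTm (measurableSet_singleton 1)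
    exact detector_aux P _ hSm q hq0 hqi hq1 εbar h0 h12 (hriskY q hq)
      (fun ω => Real.exp (c * T ω))
      ((hTm.const_mul c).exp)
      (fun ω hω => by
        simp only [Set.mem_setOf_eq] at hω
        show Real.exp (c * T ω) = _
        rw [hω, mul_one, hexpB])
      (fun ω hω => by
        simp only [Set.mem_setOf_eq] at hω
        have hT1 : T ω = -1 := (hTval ω).resolve_left hω
        show Real.exp (c * T ω) = _
        rw [hT1, show c * (-1:ℝ) = -c by ring, hexpA])
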